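/- Let $\Gamma$ be a finite graph with maximum degree at most $3$ on $r \geq 4$ vertices that is a subtree of the $3$-regular tree. Then there exists a function $f: V\Gamma \to \{-1,0,1\}$ with $\sum_{e \in E\Gamma} |f(x_e) - f(y_e)|^p \leq 3 \cdot 2^p$ for all $p \geq 1$, and such that both $|f^{-1}(1)| \geq r/4 - 1$ and $|f^{-1}(-1)| \geq r/4 - 1$. -/

import Mathlib

open Finset

open SimpleGraph


section TreeSide

variable {V : Type*} [Fintype V] [DecidableEq V] {G : SimpleGraph V} {u v w : V}

open scoped Classical in
/-- The set of vertices on the `v` side of the edge `uv` (reachable from `v` after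
deleting the edge `uv`). -/
noncomputable def sideF (G : SimpleGraph V) (u v : V) : Finset V :=
  Finset.univ.filter fun x => (G.deleteEdges {s(u,v)}).Reachable v x

lemma mem_sideF {x : V} : x ∈ sideF G u v ↔ (G.deleteEdges {s(u,v)}).Reachable v x := by
  simp [sideF]

omit [Fintype V] [DecidableEq V] in
lemma not_reach (hG : G.IsAcyclic) (h : G.Adj u v) :
    ¬ (G.deleteEdges {s(u,v)}).Reachable u v :=
  ((isAcyclic_iff_forall_adj_isBridge.mp hG) h)

lemma v_mem_sideF : v ∈ sideF G u v := mem_sideF.mpr (Reachable.refl v)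

lemma not_mem_sideF (hG : G.IsAcyclic) (h : G.Adj u v) : u ∉ sideF G u v := fun hu =>
  not_reach hG h (mem_sideF.mp hu).symm

omit [Fintype V] in
lemma not_mem_support (hG : G.IsAcyclic) (h : G.Adj u v) {x : V}
    (p : (G.deleteEdges {s(u,v)}).Walk v x) : u ∉ p.support := fun hu =>
  not_reach hG h ((p.takeUntil u hu).reachable.symm)

lemma reach_other (hG : G.IsAcyclic) (h : G.Adj u v) {x : V} (hx : x ∈ sideF G u v) (w : V) :
    (G.deleteEdges {s(u,w)}).Reachable v x := by
  obtain ⟨p⟩ := mem_sideF.mp hx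
  have hu := not_mem_support hG h p
  refine ⟨p.transfer _ ?_⟩
  intro e he
  have heG := p.edges_subset_edgeSet he
  rw [edgeSet_deleteEdges] at heG
  rw [edgeSet_deleteEdges]
  refine ⟨heG.1, ?_⟩
  simp only [Set.mem_singleton_iff]
  rintro rfl
  exact hu (p.fst_mem_support_of_mem_edges he)

lemma sideF_disjoint (hG : G.IsAcyclic) (hv : G.Adj u v) (hw : G.Adj u w) (hvw : v ≠ w)
    {x : V} (h1 : x ∈ sideF G u v) (h2 : x ∈ sideF G u w) : False := by
  have r1 : (G.deleteEdges {s(u,w)}).Reachable v x := reach_other hG hv h1 w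
  have r2 : (G.deleteEdges {s(u,w)}).Reachable w x := mem_sideF.mp h2
  have hadj : (G.deleteEdges {s(u,w)}).Adj v u := by
    rw [deleteEdges_adj]
    refine ⟨hv.symm, ?_⟩
    simp only [Set.mem_singleton_iff, Sym2.eq_iff]
    rintro (⟨h1', h2'⟩ | ⟨h1', h2'⟩)
    · exact hv.ne' h1'
    · exact hvw h1'
  exact not_reach hG hw (((r2.trans r1.symm).trans hadj.reachable).symm)

lemma sideF_cover_aux (hG : G.IsAcyclic) {x c : V} (p : G.Walk x c) :
    x = c ∨ ∃ w, G.Adj c w ∧ x ∈ sideF G c w := by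
  induction p with
  | nil => exact .inl rfl
  | @cons a b c h q ih =>
    rcases ih with rfl | ⟨w, hw, hb⟩
    · exact .inr ⟨a, h.symm, v_mem_sideF⟩
    · by_cases hac : a = c
      · exact .inl hac
      · refine .inr ⟨w, hw, ?_⟩
        rw [mem_sideF]
        refine (mem_sideF.mp hb).trans (Adj.reachable ?_)
        rw [deleteEdges_adj]
        refine ⟨h.symm, ?_⟩
        simp only [Set.mem_singleton_iff, Sym2.eq_iff]
        rintro (⟨h1', h2'⟩ | ⟨h1', h2'⟩)
        · exact not_mem_sideF hG hw (h1' ▸ hb)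
        · exact hac h2'

lemma sideF_cover (hG : G.IsAcyclic) (hc : G.Connected) (u : V) {x : V} (hx : x ≠ u) :
    ∃ w, G.Adj u w ∧ x ∈ sideF G u w := by
  obtain ⟨p⟩ := hc.preconnected x u
  rcases sideF_cover_aux hG p with rfl | h
  · exact absurd rfl hx
  · exact h

lemma sideF_compl (hG : G.IsAcyclic) (hc : G.Connected) (h : G.Adj u v) :
    sideF G v u = Finset.univ \ sideF G u v := by
  have hGd : G.deleteEdges {s(v,u)} = G.deleteEdges {s(u,v)} := by rw [Sym2.eq_swap]
  ext x
  rw [Finset.mem_sdiff, mem_sideF, hGd]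
  constructor
  · intro hx
    refine ⟨Finset.mem_univ x, fun hx' => ?_⟩
    exact not_reach hG h (hx.trans (mem_sideF.mp hx').symm)
  · rintro ⟨-, hx⟩
    by_cases hxu : x = u
    · rw [hxu]
    · obtain ⟨w, hw, hxw⟩ := sideF_cover hG hc u hxu
      have hwv : w ≠ v := by rintro rfl; exact hx hxw
      have r1 : (G.deleteEdges {s(u,v)}).Reachable w x := reach_other hG hw hxw v
      have hadj : (G.deleteEdges {s(u,v)}).Adj u w := by
        rw [deleteEdges_adj]
        refine ⟨hw, ?_⟩
        simp only [Set.mem_singleton_iff, Sym2.eq_iff]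
        rintro (⟨h1', h2'⟩ | ⟨h1', h2'⟩)
        · exact hwv h2'
        · exact h.ne h1'
      exact hadj.reachable.trans r1

lemma card_sideF_add (hG : G.IsAcyclic) (hc : G.Connected) (h : G.Adj u v) :
    (sideF G u v).card + (sideF G v u).card = Fintype.card V := by
  rw [sideF_compl hG hc h, Finset.card_sdiff_of_subset (Finset.subset_univ _)]
  have h1 := Finset.card_le_univ (sideF G u v)
  have h2 : (Finset.univ : Finset V).card = Fintype.card V := Finset.card_univ
  omega

variable [DecidableRel G.Adj]

lemma card_sideF_sum (hG : G.IsAcyclic) (hc : G.Connected) (u : V) :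
    ∑ w ∈ G.neighborFinset u, (sideF G u w).card + 1 = Fintype.card V := by
  have hbU : (G.neighborFinset u).biUnion (fun w => sideF G u w) = Finset.univ.erase u := by
    ext x
    simp only [Finset.mem_biUnion, Finset.mem_erase, Finset.mem_univ, and_true,
      SimpleGraph.mem_neighborFinset]
    constructor
    · rintro ⟨w, hw, hx⟩
      rintro rfl
      exact not_mem_sideF hG hw hx
    · intro hx
      exact sideF_cover hG hc u hx
  have hdisj : ∀ w₁ ∈ G.neighborFinset u, ∀ w₂ ∈ G.neighborFinset u, w₁ ≠ w₂ →
      Disjoint (sideF G u w₁) (sideF G u w₂) := by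
    intro w₁ hw₁ w₂ hw₂ hne
    rw [SimpleGraph.mem_neighborFinset] at hw₁ hw₂
    exact Finset.disjoint_left.mpr fun x h1 h2 => sideF_disjoint hG hw₁ hw₂ hne h1 h2
  have hcard := Finset.card_biUnion hdisj
  rw [hbU, Finset.card_erase_of_mem (Finset.mem_univ u), Finset.card_univ] at hcard
  have h1 : 0 < Fintype.card V := Fintype.card_pos_iff.mpr ⟨u⟩
  omega

omit [DecidableRel G.Adj] in
/-- A crossing edge for the partition given by edge `uv` must be `uv` itself. -/
lemma no_cross (hG : G.IsAcyclic) (hc : G.Connected) (h : G.Adj u v) {x y : V}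
    (hxy : G.Adj x y) (hx : x ∈ sideF G u v) (hy : y ∉ sideF G u v) : x = v ∧ y = u := by
  by_contra hcon
  have hedge : (G.deleteEdges {s(u,v)}).Adj x y := by
    rw [deleteEdges_adj]
    refine ⟨hxy, ?_⟩
    simp only [Set.mem_singleton_iff, Sym2.eq_iff]
    rintro (⟨h1', h2'⟩ | ⟨h1', h2'⟩)
    · exact not_mem_sideF hG h (h1' ▸ hx)
    · exact hcon ⟨h1', h2'⟩
  have hy' : y ∈ sideF G v u := by
    rw [sideF_compl hG hc h, Finset.mem_sdiff]
    exact ⟨Finset.mem_univ y, hy⟩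
  have hGd : G.deleteEdges {s(v,u)} = G.deleteEdges {s(u,v)} := by rw [Sym2.eq_swap]
  have r2 : (G.deleteEdges {s(u,v)}).Reachable u y := by
    have := mem_sideF.mp hy'
    rwa [hGd] at this
  exact not_reach hG h ((r2.trans hedge.reachable.symm).trans (mem_sideF.mp hx).symm)

end TreeSide

section Extremal
variable {V : Type*} [Fintype V] [DecidableEq V] {G : SimpleGraph V} [DecidableRel G.Adj]

lemma exists_balanced_edge (hG : G.IsTree) (hdeg : ∀ v, G.degree v ≤ 3)
    (h4 : 4 ≤ Fintype.card V) :
    ∃ u v, G.Adj u v ∧ Fintype.card V ≤ 3 * (sideF G u v).card + 1 ∧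
      2 * (sideF G u v).card ≤ Fintype.card V := by
  have hac := hG.IsAcyclic
  have hc := hG.isConnected
  -- there is an edge
  obtain ⟨a, b, hab⟩ : ∃ a b, G.Adj a b := by
    have h2 : 1 < Fintype.card V := by omega
    obtain ⟨a, b, hne⟩ := Fintype.exists_pair_of_one_lt_card h2
    obtain ⟨p⟩ := hc.preconnected a b
    cases p with
    | nil => exact absurd rfl hne
    | cons h q => exact ⟨_, _, h⟩
  set P : Finset (V × V) :=
    Finset.univ.filter (fun q => G.Adj q.1 q.2 ∧ 2 * (sideF G q.1 q.2).card ≤ Fintype.card V)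
    with hP
  have hmemP : ∀ q : V × V, q ∈ P ↔
      G.Adj q.1 q.2 ∧ 2 * (sideF G q.1 q.2).card ≤ Fintype.card V := by
    intro q; simp [hP]
  have hne : P.Nonempty := by
    have hadd := card_sideF_add hac hc hab
    by_cases hle : 2 * (sideF G a b).card ≤ Fintype.card V
    · exact ⟨(a, b), (hmemP _).mpr ⟨hab, hle⟩⟩
    · refine ⟨(b, a), (hmemP _).mpr ⟨hab.symm, ?_⟩⟩
      show 2 * (sideF G b a).card ≤ Fintype.card V
      omega
  obtain ⟨⟨u, v⟩, hmem, hmax⟩ := P.exists_max_image (fun q => (sideF G q.1 q.2).card) hne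
  rw [hmemP] at hmem
  obtain ⟨huv, h2s⟩ := hmem
  dsimp only at huv h2s
  refine ⟨u, v, huv, ?_, h2s⟩
  by_contra hlt
  push_neg at hlt
  set s := (sideF G u v).card with hs
  have hsum := card_sideF_sum hac hc u
  have hvN : v ∈ G.neighborFinset u := (SimpleGraph.mem_neighborFinset G u v).mpr huv
  have hsplit : (sideF G u v).card + ∑ w ∈ (G.neighborFinset u).erase v, (sideF G u w).card
      = ∑ w ∈ G.neighborFinset u, (sideF G u w).card :=
    Finset.add_sum_erase _ (fun w => (sideF G u w).card) hvN
  have hEne : ((G.neighborFinset u).erase v).Nonempty := by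
    rw [Finset.nonempty_iff_ne_empty]
    intro hE
    rw [hE, Finset.sum_empty] at hsplit
    omega
  obtain ⟨w, hwE, hwmax⟩ :=
    ((G.neighborFinset u).erase v).exists_max_image (fun w => (sideF G u w).card) hEne
  have hwv : w ≠ v := (Finset.mem_erase.mp hwE).1
  have hw : G.Adj u w := (SimpleGraph.mem_neighborFinset G u w).mp (Finset.mem_erase.mp hwE).2
  have hcardE : ((G.neighborFinset u).erase v).card ≤ 2 := by
    have hd : (G.neighborFinset u).card = G.degree u := G.card_neighborFinset_eq_degree u
    have := hdeg u
    rw [Finset.card_erase_of_mem hvN]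
    omega
  set t := (sideF G u w).card with ht
  have hsumE : ∑ w ∈ (G.neighborFinset u).erase v, (sideF G u w).card ≤ 2 * t := by
    have h1 := Finset.sum_le_card_nsmul ((G.neighborFinset u).erase v)
      (fun w => (sideF G u w).card) t hwmax
    rw [smul_eq_mul] at h1
    have h2 : ((G.neighborFinset u).erase v).card * t ≤ 2 * t :=
      Nat.mul_le_mul_right t hcardE
    omega
  -- so t ≥ s + 1
  have hts : s + 1 ≤ t := by omega
  by_cases h2t : 2 * t ≤ Fintype.card V
  · have := hmax (u, w) ((hmemP _).mpr ⟨hw, h2t⟩)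
    simp only at this
    omega
  · push_neg at h2t
    have hadd : t + (sideF G w u).card = Fintype.card V := card_sideF_add hac hc hw
    have hsub : insert u (sideF G u v) ⊆ sideF G w u := by
      intro x hx
      rw [sideF_compl hac hc hw, Finset.mem_sdiff]
      refine ⟨Finset.mem_univ x, fun hx' => ?_⟩
      rcases Finset.mem_insert.mp hx with rfl | hxA
      · exact not_mem_sideF hac hw hx'
      · exact sideF_disjoint hac huv hw hwv.symm hxA hx'
    have hcard2 : s + 1 ≤ (sideF G w u).card := by
      have h1 : (insert u (sideF G u v)).card = s + 1 :=
        Finset.card_insert_of_notMem (not_mem_sideF hac huv)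
      have := Finset.card_le_card hsub
      omega
    have hmem2 : (w, u) ∈ P := (hmemP _).mpr ⟨hw.symm, by show 2 * (sideF G w u).card ≤ Fintype.card V; omega⟩
    have := hmax (w, u) hmem2
    dsimp only at this
    omega

end Extremal

/-- On a finite tree of maximum degree at most `3` (a subtree of the `3`-regular tree)
with `r ≥ 4` vertices there is a `{-1,0,1}`-valued function whose `p`-energy (counted
over ordered adjacent pairs, twice the edge sum) is at most `2 · 3 · 2^p` and whose
level sets `f⁻¹(±1)` each have at least `r/4 - 1` vertices. -/
theorem stmt12 {V : Type*} [Fintype V] [DecidableEq V] (G : SimpleGraph V)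
    [DecidableRel G.Adj] (hG : G.IsTree) (hdeg : ∀ v, G.degree v ≤ 3)
    (r : ℕ) (hr : Fintype.card V = r) (h4 : 4 ≤ r) :
    ∃ f : V → ℝ, (∀ v, f v = -1 ∨ f v = 0 ∨ f v = 1) ∧
      (∀ p : ℝ, 1 ≤ p →
        ∑ x, ∑ y, (if G.Adj x y then |f x - f y| ^ p else 0) ≤ 2 * (3 * 2 ^ p)) ∧
      (r : ℝ) / 4 - 1 ≤ ({v | f v = 1}.ncard : ℝ) ∧
      (r : ℝ) / 4 - 1 ≤ ({v | f v = -1}.ncard : ℝ) := by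
  subst hr
  have hac := hG.IsAcyclic
  have hc := hG.isConnected
  obtain ⟨u, v, huv, h3s, h2s⟩ := exists_balanced_edge hG hdeg h4
  set A := sideF G u v with hA
  classical
  refine ⟨fun x => if x ∈ A then (1 : ℝ) else -1, ?_, ?_, ?_, ?_⟩
  · intro x
    by_cases hx : x ∈ A <;> simp [hx]
  · -- energy bound
    intro p hp
    have hp0 : p ≠ 0 := by intro h; rw [h] at hp; norm_num at hp
    have h2p : (0 : ℝ) < 2 ^ p := Real.rpow_pos_of_pos (by norm_num) p
    have key : ∀ x y : V,
        (if G.Adj x y then |(if x ∈ A then (1:ℝ) else -1) - (if y ∈ A then (1:ℝ) else -1)| ^ p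
          else 0) ≤
        (if x = v ∧ y = u then (2:ℝ) ^ p else 0) + (if x = u ∧ y = v then (2:ℝ) ^ p else 0) := by
      intro x y
      have hg0 : (0:ℝ) ≤ (if x = v ∧ y = u then (2:ℝ) ^ p else 0) +
          (if x = u ∧ y = v then (2:ℝ) ^ p else 0) := by
        apply add_nonneg <;> split_ifs <;> simp [h2p.le]
      by_cases hx : x ∈ A <;> by_cases hy : y ∈ A
      · simpa [hx, hy, Real.zero_rpow hp0] using hg0
      · -- crossing from A to complement
        by_cases hadj : G.Adj x y
        · obtain ⟨hxv, hyu⟩ := no_cross hac hc huv hadj hx hy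
          have hterm : (if G.Adj x y then
              |(if x ∈ A then (1:ℝ) else -1) - (if y ∈ A then (1:ℝ) else -1)| ^ p else 0)
              = 2 ^ p := by
            rw [if_pos hadj, if_pos hx, if_neg hy]
            norm_num
          rw [hterm, if_pos ⟨hxv, hyu⟩]
          refine le_add_of_nonneg_right ?_
          split_ifs
          · exact h2p.le
          · exact le_refl 0
        · simp only [hadj, if_false]
          exact hg0
      · by_cases hadj : G.Adj x y
        · obtain ⟨hyv, hxu⟩ := no_cross hac hc huv hadj.symm hy hx
          have hterm : (if G.Adj x y then
              |(if x ∈ A then (1:ℝ) else -1) - (if y ∈ A then (1:ℝ) else -1)| ^ p else 0)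
              = 2 ^ p := by
            rw [if_pos hadj, if_neg hx, if_pos hy]
            norm_num
          rw [hterm, if_pos (show x = u ∧ y = v from ⟨hxu, hyv⟩)]
          refine le_add_of_nonneg_left ?_
          split_ifs
          · exact h2p.le
          · exact le_refl 0
        · simp only [hadj, if_false]
          exact hg0
      · simpa [hx, hy, Real.zero_rpow hp0] using hg0
    calc ∑ x, ∑ y, (if G.Adj x y then
            |(if x ∈ A then (1:ℝ) else -1) - (if y ∈ A then (1:ℝ) else -1)| ^ p else 0)
        ≤ ∑ x : V, ∑ y : V, ((if x = v ∧ y = u then (2:ℝ) ^ p else 0) +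
            (if x = u ∧ y = v then (2:ℝ) ^ p else 0)) :=
          Finset.sum_le_sum fun x _ => Finset.sum_le_sum fun y _ => key x y
      _ = 2 ^ p + 2 ^ p := by
          simp [Finset.sum_add_distrib, ite_and, Finset.sum_ite_eq']
      _ ≤ 2 * (3 * 2 ^ p) := by linarith
  · -- size of f⁻¹(1)
    have hset : {x | (if x ∈ A then (1:ℝ) else -1) = 1} = (A : Set V) := by
      ext x
      simp only [Set.mem_setOf_eq, Finset.mem_coe]
      by_cases hx : x ∈ A
      · rw [if_pos hx]; simp [hx]
      · rw [if_neg hx]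
        constructor
        · intro h; norm_num at h
        · intro h; exact absurd h hx
    rw [hset, Set.ncard_coe_finset]
    have h1 : (Fintype.card V : ℝ) ≤ 3 * A.card + 1 := by exact_mod_cast h3s
    have h2 : (4 : ℝ) ≤ Fintype.card V := by exact_mod_cast h4
    linarith
  · -- size of f⁻¹(-1)
    have hcompl : sideF G v u = Finset.univ \ A := sideF_compl hac hc huv
    have hset : {x | (if x ∈ A then (1:ℝ) else -1) = -1} = (sideF G v u : Set V) := by
      ext x
      rw [hcompl]
      simp only [Set.mem_setOf_eq, Finset.coe_sdiff, Finset.coe_univ, Set.mem_diff,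
        Set.mem_univ, true_and, Finset.mem_coe]
      by_cases hx : x ∈ A
      · rw [if_pos hx]
        constructor
        · intro h; norm_num at h
        · intro h; exact absurd hx h
      · rw [if_neg hx]; simp [hx]
    rw [hset, Set.ncard_coe_finset]
    have hadd : A.card + (sideF G v u).card = Fintype.card V := card_sideF_add hac hc huv
    have h1 : (A.card : ℝ) + (sideF G v u).card = Fintype.card V := by exact_mod_cast hadd
    have h2 : 2 * (A.card : ℝ) ≤ Fintype.card V := by exact_mod_cast h2s
    have h3 : (4 : ℝ) ≤ Fintype.card V := by exact_mod_cast h4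
    linarith
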